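/- Restriction preserves strong admissibility downward along the numbering: if Lab is a strongly admissible labelling with min-max numbering MM, and n ∈ ℕ, then the labelling Lab' that keeps the labels of all arguments x with MM(x) ≤ n and relabels all other in/out arguments undec is again a strongly admissible labelling, with MM restricted as its min-max numbering. -/
import Mathlib


inductive Label where
  | inn | out | und
deriving DecidableEq

/-- A labelling is admissible if every in-labelled argument has all its attackers
labelled out, and every out-labelled argument has at least one in-labelled attacker. -/
def Admissible {Ar : Type*} (att : Ar → Ar → Prop) (L : Ar → Label) : Prop :=
  (∀ x, L x = Label.inn → ∀ y, att y x → L y = Label.out) ∧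
  (∀ x, L x = Label.out → ∃ y, att y x ∧ L y = Label.inn)

/-- A min-max numbering (with only natural-number values): in-arguments are numbered
1 + max of the numbers of their out-labelled attackers (max ∅ = 0), and out-arguments
1 + min of the numbers of their in-labelled attackers. -/
def IsMinMax {Ar : Type*} (att : Ar → Ar → Prop) (L : Ar → Label) (MM : Ar → ℕ) : Prop :=
  (∀ x, L x = Label.inn → MM x = sSup (MM '' {y | att y x ∧ L y = Label.out}) + 1) ∧
  (∀ x, L x = Label.out → MM x = sInf (MM '' {y | att y x ∧ L y = Label.inn}) + 1)

/-- Strongly admissible: admissible and admitting a min-max numbering with only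
natural-number (finite) values. -/
def StronglyAdmissible {Ar : Type*} (att : Ar → Ar → Prop) (L : Ar → Label) : Prop :=
  Admissible att L ∧ ∃ MM : Ar → ℕ, IsMinMax att L MM

/-- Complete labelling: admissible, and every undec argument has an undec attacker
and no in-labelled attacker. -/
def CompleteLab {Ar : Type*} (att : Ar → Ar → Prop) (L : Ar → Label) : Prop :=
  Admissible att L ∧
  ∀ x, L x = Label.und →
    (∃ y, att y x ∧ L y = Label.und) ∧ ∀ y, att y x → L y ≠ Label.inn

/-- The order on labellings: Lab1 ⊑ Lab2 iff in(Lab1) ⊆ in(Lab2) and out(Lab1) ⊆ out(Lab2). -/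
def LabLe {Ar : Type*} (L1 L2 : Ar → Label) : Prop :=
  (∀ x, L1 x = Label.inn → L2 x = Label.inn) ∧
  (∀ x, L1 x = Label.out → L2 x = Label.out)

/-- Restricting a strongly admissible labelling to arguments with
min-max number ≤ n (relabelling the others undec) is again strongly admissible,
with the same numbering as its min-max numbering. -/
theorem restriction_stronglyAdmissible
    {Ar : Type*} [Fintype Ar] (att : Ar → Ar → Prop) (Lab : Ar → Label) (MM : Ar → ℕ)
    (hadm : Admissible att Lab) (hmm : IsMinMax att Lab MM) (n : ℕ)
    (Lab' : Ar → Label)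
    (hkeep : ∀ x, Lab x ≠ Label.und → MM x ≤ n → Lab' x = Lab x)
    (hdrop : ∀ x, (Lab x = Label.und ∨ ¬ MM x ≤ n) → Lab' x = Label.und) :
    Admissible att Lab' ∧ IsMinMax att Lab' MM := by
  -- characterize Lab'
  have hin' : ∀ x, Lab' x = Label.inn → Lab x = Label.inn ∧ MM x ≤ n := by
    intro x hx
    by_cases h : Lab x = Label.und ∨ ¬ MM x ≤ n
    · rw [hdrop x h] at hx; cases hx
    · push_neg at h
      have := hkeep x h.1 h.2
      rw [this] at hx
      exact ⟨hx, h.2⟩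
  have hout' : ∀ x, Lab' x = Label.out → Lab x = Label.out ∧ MM x ≤ n := by
    intro x hx
    by_cases h : Lab x = Label.und ∨ ¬ MM x ≤ n
    · rw [hdrop x h] at hx; cases hx
    · push_neg at h
      have := hkeep x h.1 h.2
      rw [this] at hx
      exact ⟨hx, h.2⟩
  -- out-attackers of a low inn argument are low
  have hatt_low : ∀ x, Lab x = Label.inn → ∀ y, att y x → Lab y = Label.out →
      MM y < MM x := by
    intro x hx y hy hly
    have h1 := hmm.1 x hx
    have hb : MM y ≤ sSup (MM '' {y | att y x ∧ Lab y = Label.out}) :=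
      le_csSup (Set.toFinite _).bddAbove ⟨y, ⟨hy, hly⟩, rfl⟩
    omega
  -- for low out argument, a minimal inn attacker
  have hminwit : ∀ x, Lab x = Label.out → ∃ y, att y x ∧ Lab y = Label.inn ∧ MM y < MM x := by
    intro x hx
    obtain ⟨y0, hy0, hly0⟩ := hadm.2 x hx
    have hne : (MM '' {y | att y x ∧ Lab y = Label.inn}).Nonempty := ⟨MM y0, y0, ⟨hy0, hly0⟩, rfl⟩
    obtain ⟨y, ⟨hy, hly⟩, hMMy⟩ := Nat.sInf_mem hne
    exact ⟨y, hy, hly, by have := hmm.2 x hx; omega⟩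
  constructor
  · constructor
    · intro x hx y hy
      obtain ⟨hlx, hnx⟩ := hin' x hx
      have hly := hadm.1 x hlx y hy
      have hlt := hatt_low x hlx y hy hly
      rw [hkeep y (by rw [hly]; simp) (by omega)]
      exact hly
    · intro x hx
      obtain ⟨hlx, hnx⟩ := hout' x hx
      obtain ⟨y, hy, hly, hlt⟩ := hminwit x hlx
      refine ⟨y, hy, ?_⟩
      rw [hkeep y (by rw [hly]; simp) (by omega)]
      exact hly
  · constructor
    · intro x hx
      obtain ⟨hlx, hnx⟩ := hin' x hx
      have hset : {y | att y x ∧ Lab' y = Label.out} = {y | att y x ∧ Lab y = Label.out} := by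
        ext y
        constructor
        · rintro ⟨hy, hly⟩; exact ⟨hy, (hout' y hly).1⟩
        · rintro ⟨hy, hly⟩
          refine ⟨hy, ?_⟩
          have hlt := hatt_low x hlx y hy hly
          rw [hkeep y (by rw [hly]; simp) (by omega)]
          exact hly
      rw [hset]
      exact hmm.1 x hlx
    · intro x hx
      obtain ⟨hlx, hnx⟩ := hout' x hx
      have h2 := hmm.2 x hlx
      obtain ⟨y0, hy0, hly0, hlt0⟩ := hminwit x hlx
      have hly0' : Lab' y0 = Label.inn := by
        rw [hkeep y0 (by rw [hly0]; simp) (by omega)]; exact hly0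
      have hsub : MM '' {y | att y x ∧ Lab' y = Label.inn} ⊆
          MM '' {y | att y x ∧ Lab y = Label.inn} := by
        rintro m ⟨y, ⟨hy, hly⟩, rfl⟩
        exact ⟨y, ⟨hy, (hin' y hly).1⟩, rfl⟩
      have hne' : (MM '' {y | att y x ∧ Lab' y = Label.inn}).Nonempty :=
        ⟨MM y0, y0, ⟨hy0, hly0'⟩, rfl⟩
      have hne : (MM '' {y | att y x ∧ Lab y = Label.inn}).Nonempty :=
        ⟨MM y0, y0, ⟨hy0, hly0⟩, rfl⟩
      have heq : sInf (MM '' {y | att y x ∧ Lab' y = Label.inn}) =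
          sInf (MM '' {y | att y x ∧ Lab y = Label.inn}) := by
        apply le_antisymm
        · obtain ⟨y1, ⟨hy1, hly1⟩, hM1⟩ := Nat.sInf_mem hne
          have hlt1 : MM y1 < MM x := by omega
          have hly1' : Lab' y1 = Label.inn := by
            rw [hkeep y1 (by rw [hly1]; simp) (by omega)]; exact hly1
          calc sInf (MM '' {y | att y x ∧ Lab' y = Label.inn}) ≤ MM y1 :=
                Nat.sInf_le ⟨y1, ⟨hy1, hly1'⟩, rfl⟩
            _ = _ := hM1
        · exact Nat.sInf_le (hsub (Nat.sInf_mem hne'))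
      rw [heq]
      exact h2
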